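/- Let F_h = (W_h, R_h) be a frame with R_h transitive and weakly connected, and let M be a model based on the δ-product of F_h and some frame F_v = (W_v, R_v). If M, (r_h, r_v) ⊨ δ ∧ □_h⁺◇_v(◇_h δ ∧ □_h□_h ¬δ), then there exist points x_n ∈ W_h ∩ W_v (n < ω) such that for all n: (i) x_0 = r_v and x_0 R_v x_n for n > 0; (ii) for n > 0, M, (x_{n-1}, x_n) ⊨ ◇_h δ ∧ □_h□_h ¬δ; (iii) for n > 0 and every z, x_{n-1} R_h z implies z = x_n or x_n R_h z; (iv) x_0 = r_h and x_m R_h x_n for all m < n. -/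

import Mathlib

/-- Formulas of the bimodal language with horizontal and vertical boxes
and the diagonal constant `δ`. -/
inductive Fml (P : Type*) where
  | var : P → Fml P
  | delta : Fml P
  | neg : Fml P → Fml P
  | and : Fml P → Fml P → Fml P
  | boxh : Fml P → Fml P
  | boxv : Fml P → Fml P
  deriving DecidableEq

namespace Fml

variable {P : Type*}

def or (φ ψ : Fml P) : Fml P := .neg (.and (.neg φ) (.neg ψ))
def imp (φ ψ : Fml P) : Fml P := Fml.or (.neg φ) ψ
def diah (φ : Fml P) : Fml P := .neg (.boxh (.neg φ))
def diav (φ : Fml P) : Fml P := .neg (.boxv (.neg φ))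
/-- `□_h⁺ φ := φ ∧ □_h φ` -/
def boxhp (φ : Fml P) : Fml P := .and φ (.boxh φ)
/-- `□_v⁺ φ := φ ∧ □_v φ` -/
def boxvp (φ : Fml P) : Fml P := .and φ (.boxv φ)
/-- `◇_h⁺ φ := φ ∨ ◇_h φ` -/
def diahp (φ : Fml P) : Fml P := Fml.or φ (diah φ)
/-- `◇_v⁺ φ := φ ∨ ◇_v φ` -/
def diavp (φ : Fml P) : Fml P := Fml.or φ (diav φ)

end Fml

/-- Satisfaction in a model based on the δ-product of the frames `(Wh, Rh)` and `(Wv, Rv)`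
(frames living inside the ambient type `U`), with valuation `v`.  The diagonal `δ` is
interpreted as `{(x,x) : x ∈ Wh ∩ Wv}`. -/
def dsat {U P : Type*} (Wh Wv : Set U) (Rh Rv : U → U → Prop) (v : P → Set (U × U)) :
    U × U → Fml P → Prop
  | p, .var q => p ∈ v q
  | p, .delta => p.1 = p.2 ∧ p.1 ∈ Wh ∧ p.1 ∈ Wv
  | p, .neg φ => ¬ dsat Wh Wv Rh Rv v p φ
  | p, .and φ ψ => dsat Wh Wv Rh Rv v p φ ∧ dsat Wh Wv Rh Rv v p ψ
  | p, .boxh φ => ∀ x : U, x ∈ Wh → Rh p.1 x → dsat Wh Wv Rh Rv v (x, p.2) φ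
  | p, .boxv φ => ∀ y : U, y ∈ Wv → Rv p.2 y → dsat Wh Wv Rh Rv v (p.1, y) φ

/-- **Linear grid generation**: if `R_h` is transitive and weakly connected and the formula
`lingrid = δ ∧ □_h⁺◇_v(◇_hδ ∧ □_h□_h¬δ)` holds at `(r_h, r_v)` in a model based on a
δ-product frame, then there are points `x_n ∈ W_h ∩ W_v` with
(i) `x_0 = r_v` and `x_0 R_v x_n` for `n > 0`;
(ii) `◇_hδ ∧ □_h□_h¬δ` holds at `(x_{n-1}, x_n)` for `n > 0`;
(iii) for `n > 0`, every `R_h`-successor `z` of `x_{n-1}` satisfies `z = x_n` or `x_n R_h z`;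
(iv) `x_0 = r_h` and `x_m R_h x_n` for all `m < n`. -/
theorem linear_grid_generation {U P : Type*} (Wh Wv : Set U) (Rh Rv : U → U → Prop)
    (v : P → Set (U × U))
    (htrans : ∀ a b c : U, a ∈ Wh → b ∈ Wh → c ∈ Wh → Rh a b → Rh b c → Rh a c)
    (hwc : ∀ a b c : U, a ∈ Wh → b ∈ Wh → c ∈ Wh → Rh a b → Rh a c →
      b = c ∨ Rh b c ∨ Rh c b)
    (rh rv : U) (hrh : rh ∈ Wh) (hrv : rv ∈ Wv)
    (hsat : dsat Wh Wv Rh Rv v (rh, rv)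
      (.and .delta
        (Fml.boxhp (Fml.diav (.and (Fml.diah .delta) (.boxh (.boxh (.neg .delta)))))))) :
    ∃ x : ℕ → U, ∀ n : ℕ,
      x n ∈ Wh ∧ x n ∈ Wv ∧
      x 0 = rv ∧ (0 < n → Rv (x 0) (x n)) ∧
      (0 < n → dsat Wh Wv Rh Rv v (x (n - 1), x n)
        (.and (Fml.diah .delta) (.boxh (.boxh (.neg .delta))))) ∧
      (0 < n → ∀ z : U, z ∈ Wh → Rh (x (n - 1)) z → z = x n ∨ Rh (x n) z) ∧
      x 0 = rh ∧ (∀ m : ℕ, m < n → Rh (x m) (x n)) := by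
  classical
  obtain ⟨⟨heq, _, hWv0⟩, hψ0, hψbox⟩ :
      (rh = rv ∧ rh ∈ Wh ∧ rh ∈ Wv) ∧
      dsat Wh Wv Rh Rv v (rh, rv)
        (Fml.diav (.and (Fml.diah .delta) (.boxh (.boxh (.neg .delta))))) ∧
      (∀ a : U, a ∈ Wh → Rh rh a → dsat Wh Wv Rh Rv v (a, rv)
        (Fml.diav (.and (Fml.diah .delta) (.boxh (.boxh (.neg .delta)))))) := hsat
  have key : ∀ a : U, a ∈ Wh → (a = rh ∨ Rh rh a) →
      ∃ b, b ∈ Wh ∧ b ∈ Wv ∧ Rv rv b ∧ Rh a b ∧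
        dsat Wh Wv Rh Rv v (a, b)
          (.and (Fml.diah .delta) (.boxh (.boxh (.neg .delta)))) := by
    intro a ha hra
    have hψa : dsat Wh Wv Rh Rv v (a, rv)
        (Fml.diav (.and (Fml.diah .delta) (.boxh (.boxh (.neg .delta))))) := by
      rcases hra with rfl | h
      · exact hψ0
      · exact hψbox a ha h
    simp only [Fml.diav, dsat, not_forall] at hψa
    obtain ⟨y, hy, hry, hχ⟩ := hψa
    obtain ⟨hdia, hbox⟩ := not_not.mp hχ
    obtain ⟨z, hz, haz, hd⟩ : ∃ z, z ∈ Wh ∧ Rh a z ∧ ¬ ¬ (z = y ∧ z ∈ Wh ∧ z ∈ Wv) := by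
      by_contra hc
      exact hdia (fun z hz haz hn => hc ⟨z, hz, haz, fun h => h hn⟩)
    obtain ⟨hzy, _, hzWv⟩ := not_not.mp hd
    subst hzy
    exact ⟨z, hz, hzWv, hry, haz, ⟨by
      simp only [Fml.diah, dsat, not_forall, not_not]
      exact ⟨z, hz, haz, rfl, hz, hzWv⟩, hbox⟩⟩
  have key' : ∀ a : U, ∃ b : U, a ∈ Wh → (a = rh ∨ Rh rh a) →
      b ∈ Wh ∧ b ∈ Wv ∧ Rv rv b ∧ Rh a b ∧
        dsat Wh Wv Rh Rv v (a, b)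
          (.and (Fml.diah .delta) (.boxh (.boxh (.neg .delta)))) := by
    intro a
    by_cases ha : a ∈ Wh ∧ (a = rh ∨ Rh rh a)
    · obtain ⟨b, hb⟩ := key a ha.1 ha.2
      exact ⟨b, fun _ _ => hb⟩
    · exact ⟨a, fun h1 h2 => absurd ⟨h1, h2⟩ ha⟩
  choose g hg using key'
  set x : ℕ → U := fun n => g^[n] rh with hxdef
  have hx0 : x 0 = rh := rfl
  have hxsucc : ∀ n, x (n + 1) = g (x n) := fun n =>
    Function.iterate_succ_apply' g n rh
  have inv : ∀ n : ℕ, x n ∈ Wh ∧ x n ∈ Wv ∧ (x n = rh ∨ Rh rh (x n)) ∧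
      (0 < n → Rv rv (x n) ∧ Rh (x (n - 1)) (x n) ∧
        dsat Wh Wv Rh Rv v (x (n - 1), x n)
          (.and (Fml.diah .delta) (.boxh (.boxh (.neg .delta))))) := by
    intro n
    induction n with
    | zero => exact ⟨hrh, by rw [hx0, heq]; exact hrv, Or.inl rfl, by omega⟩
    | succ n ih =>
      obtain ⟨h1, h2, h3, _⟩ := ih
      have hgprop := hg (x n) h1 h3
      rw [← hxsucc n] at hgprop
      obtain ⟨g1, g2, g3, g4, g5⟩ := hgprop
      refine ⟨g1, g2, ?_, fun _ => ⟨g3, by simpa using g4, by simpa using g5⟩⟩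
      · right
        rcases h3 with h3 | h3
        · rw [← h3]; exact g4
        · exact htrans rh (x n) (x (n + 1)) hrh h1 g1 h3 g4
  have hadj : ∀ n : ℕ, Rh (x n) (x (n + 1)) := by
    intro n
    have := (inv (n + 1)).2.2.2 (by omega)
    simpa using this.2.1
  have hchain : ∀ n m : ℕ, m < n → Rh (x m) (x n) := by
    intro n
    induction n with
    | zero => omega
    | succ n ih =>
      intro m hm
      rcases Nat.lt_succ_iff_lt_or_eq.mp hm with hm | rfl
      · exact htrans (x m) (x n) (x (n + 1)) (inv m).1 (inv n).1 (inv (n + 1)).1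
          (ih m hm) (hadj n)
      · exact hadj m
  refine ⟨x, fun n => ⟨(inv n).1, (inv n).2.1, hx0.trans heq, ?_, ?_, ?_, hx0, fun m hm => hchain n m hm⟩⟩
  · intro hn
    rw [hx0, heq]
    exact ((inv n).2.2.2 hn).1
  · intro hn
    exact ((inv n).2.2.2 hn).2.2
  · intro hn z hz hrz
    have hxn := ((inv n).2.2.2 hn).2.1
    have hbox := ((inv n).2.2.2 hn).2.2.2
    rcases hwc (x (n - 1)) (x n) z (inv (n - 1)).1 (inv n).1 hz hxn hrz with h | h | h
    · exact Or.inl h.symm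
    · exact Or.inr h
    · exfalso
      exact hbox z hz hrz (x n) (inv n).1 h ⟨rfl, (inv n).1, (inv n).2.1⟩
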